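/- Let q₁, q₂, q₃, q₄ be positive rational numbers such that √q₁ + √q₂ + √q₃ + √q₄ is rational. Then each of √q₁, √q₂, √q₃, √q₄ is rational (i.e. each qᵢ is the square of a rational number). -/

import Mathlib

open Polynomial IntermediateField

private lemma sqrt_isIntegral (a : ℚ) (ha : 0 ≤ a) : IsIntegral ℚ (Real.sqrt a) := by
  refine ⟨X ^ 2 - C a, monic_X_pow_sub_C a (by norm_num), ?_⟩
  have : (0:ℝ) ≤ (a : ℝ) := by exact_mod_cast ha
  simp [Real.sq_sqrt this]

private lemma sqrt_minpoly_splits (a : ℚ) (ha : 0 ≤ a) :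
    ((minpoly ℚ (Real.sqrt a)).map (algebraMap ℚ ℝ)).Splits := by
  have ha' : (0:ℝ) ≤ (a : ℝ) := by exact_mod_cast ha
  have hdvd : minpoly ℚ (Real.sqrt a) ∣ X ^ 2 - C a :=
    minpoly.dvd ℚ _ (by simp [Real.sq_sqrt ha'])
  have hsp : ((X ^ 2 - C a : ℚ[X]).map (algebraMap ℚ ℝ)).Splits := by
    have hmap : (X ^ 2 - C a : ℚ[X]).map (algebraMap ℚ ℝ)
        = (X - C (Real.sqrt a)) * (X + C (Real.sqrt a)) := by
      simp only [Polynomial.map_sub, Polynomial.map_pow, map_X, map_C]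
      rw [show ((algebraMap ℚ ℝ) a) = Real.sqrt a ^ 2 by
        simpa using (Real.sq_sqrt ha').symm, C_pow]
      ring
    rw [hmap]
    refine Splits.mul (Splits.X_sub_C _) ?_
    rw [show (X + C (Real.sqrt a) : ℝ[X]) = X - C (-(Real.sqrt a)) by
      rw [map_neg, sub_neg_eq_add]]
    exact Splits.X_sub_C _
  have hne : (X ^ 2 - C a : ℚ[X]) ≠ 0 :=
    (monic_X_pow_sub_C a (two_ne_zero)).ne_zero
  exact Splits.of_dvd hsp (Polynomial.map_ne_zero hne) (Polynomial.map_dvd _ hdvd)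

private lemma sqrt_minpoly_eq (a : ℚ) (ha : 0 < a)
    (hirr : ¬∃ r : ℚ, Real.sqrt a = (r : ℝ)) :
    minpoly ℚ (Real.sqrt a) = X ^ 2 - C a := by
  have ha' : (0:ℝ) ≤ (a : ℝ) := by positivity
  have hint := sqrt_isIntegral a ha.le
  have hdvd : minpoly ℚ (Real.sqrt a) ∣ X ^ 2 - C a :=
    minpoly.dvd ℚ _ (by simp [Real.sq_sqrt ha'])
  have hdeg : (minpoly ℚ (Real.sqrt a)).natDegree = 2 := by
    have hle : (minpoly ℚ (Real.sqrt a)).natDegree ≤ 2 := by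
      have := Polynomial.natDegree_le_of_dvd hdvd (monic_X_pow_sub_C a two_ne_zero).ne_zero
      simpa using this
    have hpos : 0 < (minpoly ℚ (Real.sqrt a)).natDegree := minpoly.natDegree_pos hint
    have hne1 : (minpoly ℚ (Real.sqrt a)).natDegree ≠ 1 := by
      intro h1
      obtain ⟨r, hr⟩ := minpoly.natDegree_eq_one_iff.mp h1
      exact hirr ⟨r, by simpa using hr.symm⟩
    omega
  refine (Polynomial.eq_of_monic_of_dvd_of_natDegree_le (minpoly.monic hint)
    (monic_X_pow_sub_C a two_ne_zero) hdvd ?_).symm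
  simp [hdeg]

/-- Key lemma: if the sum of four square roots of positive rationals is rational,
the first one is rational. -/
private lemma key (a b c d : ℚ) (ha : 0 < a) (hb : 0 < b) (hc : 0 < c) (hd : 0 < d)
    (s : ℚ)
    (hs : Real.sqrt a + Real.sqrt b + Real.sqrt c + Real.sqrt d = (s : ℝ)) :
    ∃ r : ℚ, Real.sqrt a = (r : ℝ) := by
  by_contra hirr
  set α := Real.sqrt a with hα
  set β := Real.sqrt b with hβ
  set γ := Real.sqrt c with hγ
  set δ := Real.sqrt d with hδ
  have hαpos : 0 < α := Real.sqrt_pos.mpr (by exact_mod_cast ha)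
  set S : Set ℝ := {α, β, γ, δ} with hS
  have hK : ∀ x ∈ S, IsIntegral ℚ x ∧ ((minpoly ℚ x).map (algebraMap ℚ ℝ)).Splits := by
    rintro x hx
    rcases hx with rfl | rfl | rfl | rfl
    · exact ⟨sqrt_isIntegral a ha.le, sqrt_minpoly_splits a ha.le⟩
    · exact ⟨sqrt_isIntegral b hb.le, sqrt_minpoly_splits b hb.le⟩
    · exact ⟨sqrt_isIntegral c hc.le, sqrt_minpoly_splits c hc.le⟩
    · exact ⟨sqrt_isIntegral d hd.le, sqrt_minpoly_splits d hd.le⟩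
  have hxmem : α ∈ adjoin ℚ S := subset_adjoin ℚ S (by simp [hS])
  have hy : aeval (-α) (minpoly ℚ α) = 0 := by
    rw [hα, sqrt_minpoly_eq a ha hirr]
    have ha' : (0:ℝ) ≤ (a : ℝ) := by positivity
    simp [Real.sq_sqrt ha']
  obtain ⟨φ, hφ⟩ := IntermediateField.exists_algHom_adjoin_of_splits_of_aeval hK hxmem hy
  -- membership of the generators
  have hmβ : β ∈ adjoin ℚ S := subset_adjoin ℚ S (by simp [hS])
  have hmγ : γ ∈ adjoin ℚ S := subset_adjoin ℚ S (by simp [hS])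
  have hmδ : δ ∈ adjoin ℚ S := subset_adjoin ℚ S (by simp [hS])
  -- φ of each generator squares to the rational
  have hsq : ∀ (x : ℝ) (q : ℚ), 0 ≤ q → x = Real.sqrt q → ∀ (hm : x ∈ adjoin ℚ S),
      φ ⟨x, hm⟩ = x ∨ φ ⟨x, hm⟩ = -x := by
    intro x q hq hxq hm
    have hq' : (0:ℝ) ≤ (q : ℝ) := by exact_mod_cast hq
    have h1 : (φ ⟨x, hm⟩) ^ 2 = (q : ℝ) := by
      have hx2 : (⟨x, hm⟩ : adjoin ℚ S) ^ 2 = (algebraMap ℚ (adjoin ℚ S)) q := by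
        ext
        push_cast
        rw [hxq, Real.sq_sqrt hq']
        rfl
      calc (φ ⟨x, hm⟩) ^ 2 = φ ((⟨x, hm⟩ : adjoin ℚ S) ^ 2) := by rw [map_pow]
        _ = (q : ℝ) := by rw [hx2]; exact (φ.commutes q).trans (by simp)
    have h2 : (φ ⟨x, hm⟩) ^ 2 = x ^ 2 := by rw [h1, hxq, Real.sq_sqrt hq']
    rcases sq_eq_sq_iff_eq_or_eq_neg.mp h2 with h | h
    · exact Or.inl h
    · exact Or.inr h
  have hle : ∀ (x : ℝ) (q : ℚ) (hq : 0 ≤ q) (hxq : x = Real.sqrt q)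
      (hm : x ∈ adjoin ℚ S), φ ⟨x, hm⟩ ≤ x := by
    intro x q hq hxq hm
    rcases hsq x q hq hxq hm with h | h
    · exact le_of_eq h
    · rw [h]
      have : 0 ≤ x := by rw [hxq]; exact Real.sqrt_nonneg _
      linarith
  -- the sum element
  have hsum : ((⟨α, hxmem⟩ : adjoin ℚ S) + ⟨β, hmβ⟩ + ⟨γ, hmγ⟩ + ⟨δ, hmδ⟩)
      = (algebraMap ℚ (adjoin ℚ S)) s := by
    ext
    push_cast
    rw [hs, eq_ratCast]
    rfl
  have hfix : φ ⟨α, hxmem⟩ + φ ⟨β, hmβ⟩ + φ ⟨γ, hmγ⟩ + φ ⟨δ, hmδ⟩ = (s : ℝ) := by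
    have := congrArg φ hsum
    rw [map_add, map_add, map_add] at this
    rw [this]; exact (φ.commutes s).trans (by simp)
  have hβle := hle β b hb.le hβ hmβ
  have hγle := hle γ c hc.le hγ hmγ
  have hδle := hle δ d hd.le hδ hmδ
  rw [hφ] at hfix
  -- now:  -α + φβ + φγ + φδ = s = α + β + γ + δ
  have : (-α) + β + γ + δ ≥ (s : ℝ) := by
    calc (-α) + β + γ + δ ≥ (-α) + φ ⟨β, hmβ⟩ + φ ⟨γ, hmγ⟩ + φ ⟨δ, hmδ⟩ := by linarith
      _ = (s : ℝ) := hfix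
  rw [← hs] at this
  linarith

/-- If `q₁, q₂, q₃, q₄` are positive rationals with `√q₁ + √q₂ + √q₃ + √q₄` rational,
then each `√qᵢ` is rational. -/
theorem stmt_16 (q₁ q₂ q₃ q₄ : ℚ) (h₁ : 0 < q₁) (h₂ : 0 < q₂) (h₃ : 0 < q₃) (h₄ : 0 < q₄)
    (h : ∃ s : ℚ,
      Real.sqrt q₁ + Real.sqrt q₂ + Real.sqrt q₃ + Real.sqrt q₄ = (s : ℝ)) :
    (∃ s : ℚ, Real.sqrt q₁ = (s : ℝ)) ∧ (∃ s : ℚ, Real.sqrt q₂ = (s : ℝ)) ∧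
    (∃ s : ℚ, Real.sqrt q₃ = (s : ℝ)) ∧ (∃ s : ℚ, Real.sqrt q₄ = (s : ℝ)) := by
  obtain ⟨s, hs⟩ := h
  refine ⟨key q₁ q₂ q₃ q₄ h₁ h₂ h₃ h₄ s hs,
    key q₂ q₁ q₃ q₄ h₂ h₁ h₃ h₄ s (by linarith),
    key q₃ q₁ q₂ q₄ h₃ h₁ h₂ h₄ s (by linarith),
    key q₄ q₁ q₂ q₃ h₄ h₁ h₂ h₃ s (by linarith)⟩
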